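/- Let D be a digraph, let k ≥ 1 be an integer, and let W be a cylindrical wall of order l ≥ 3k contained in D, with pairwise vertex-disjoint concentric dicycles Q_1,…,Q_l. Then for every directed separation (A,B) of D of order less than k there is exactly one side X ∈ {A,B} such that X ∖ (A ∩ B) contains the entire vertex set of some cycle Q_i of W. Moreover, the orientation big_W of S_k(D) that maps every (A,B) ∈ S_k(D) to this side is a tangle of order k. -/

import Mathlib

/-- Adjacency of the elementary cylindrical `k`-wall, on vertex set
`Fin (2*k) × Fin (4*k)` (cycle index of the underlying cylindrical grid of order `2k`,
position on the cycle).  It is obtained from the cylindrical grid of order `2k` by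
deleting every cycle edge whose tail position has the same parity as its cycle index. -/
def elemWallAdj (k : ℕ) (a b : Fin (2 * k) × Fin (4 * k)) : Prop :=
  (a.1 = b.1 ∧ b.2.val = (a.2.val + 1) % (4 * k) ∧ a.2.val % 2 ≠ a.1.val % 2) ∨
  (a.2 = b.2 ∧ a.2.val % 2 = 0 ∧ b.1.val = a.1.val + 1) ∨
  (a.2 = b.2 ∧ a.2.val % 2 = 1 ∧ a.1.val = b.1.val + 1)

/-- An embedding of a subdivision of the pattern digraph `B` into the host digraph `D`:
branch vertices are given by the injection `toFun`, and every edge `(u,v)` of the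
pattern is realized by a directed path in `D` (given by its list of vertices
`path u v`) from `toFun u` to `toFun v`; these paths are internally disjoint from each
other and from the branch vertices. -/
structure SubdivEmbedding {U V : Type} (B : U → U → Prop) (D : V → V → Prop) :
    Type where
  toFun : U → V
  inj : Function.Injective toFun
  path : U → U → List V
  path_head : ∀ u v, B u v → (path u v).head? = some (toFun u)
  path_last : ∀ u v, B u v → (path u v).getLast? = some (toFun v)
  path_chain : ∀ u v, B u v → (path u v).Chain' D
  path_nodup : ∀ u v, B u v → (path u v).Nodup
  path_len : ∀ u v, B u v → 2 ≤ (path u v).length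
  internal_avoid_branch : ∀ u v, B u v →
    ∀ x ∈ ((path u v).drop 1).dropLast, x ∉ Set.range toFun
  internal_disjoint : ∀ u v u' v', B u v → B u' v' → (u, v) ≠ (u', v') →
    ∀ x ∈ ((path u v).drop 1).dropLast, x ∉ ((path u' v').drop 1).dropLast

/-- The vertex set of the embedded subdivision. -/
def SubdivEmbedding.vertexSet {U V : Type} {B : U → U → Prop} {D : V → V → Prop}
    (W : SubdivEmbedding B D) : Set V :=
  {x | ∃ u v, B u v ∧ x ∈ W.path u v}

/-- The edge set of the embedded subdivision: all pairs of consecutive vertices on the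
paths realizing the pattern edges. -/
def SubdivEmbedding.edgeSet {U V : Type} {B : U → U → Prop} {D : V → V → Prop}
    (W : SubdivEmbedding B D) : Set (V × V) :=
  {q | ∃ u v, B u v ∧ [q.1, q.2] <:+: W.path u v}

/-- The vertex set of the `j`-th concentric dicycle `Q_j` of a cylindrical wall of
order `l` (given as an embedded subdivision of the elementary cylindrical `l`-wall):
all vertices lying on the paths realizing pattern edges both of whose endpoints belong
to the `j`-th band, i.e. to the grid cycles `2j` and `2j+1`. -/
def wallCycleVerts {l : ℕ} {V : Type} {D : V → V → Prop}
    (W : SubdivEmbedding (elemWallAdj l) D) (j : ℕ) : Set V :=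
  {x | ∃ u v, elemWallAdj l u v ∧ u.1.val / 2 = j ∧ v.1.val / 2 = j ∧ x ∈ W.path u v}

/-- A directed separation `(A, B)` of the digraph `D`: `A ∪ B` is the whole vertex set
and no edge has its tail in `B ∖ A` and its head in `A ∖ B`.  Its order is `|A ∩ B|`. -/
def IsDirSep {V : Type} (D : V → V → Prop) (A B : Set V) : Prop :=
  A ∪ B = Set.univ ∧ ∀ u v, D u v → u ∈ B \ A → v ∈ A \ B → False

/-- A tangle of order `k` in `D`: an orientation of all directed separations of order
less than `k`, assigning to each a big side and a small side, such that no three small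
sides cover the whole vertex set. -/
structure Tangle {V : Type} (D : V → V → Prop) (k : ℕ) : Type where
  big : Set V × Set V → Set V
  small : Set V × Set V → Set V
  sides : ∀ A B : Set V, IsDirSep D A B → (A ∩ B).ncard < k →
    (big (A, B) = A ∧ small (A, B) = B) ∨ (big (A, B) = B ∧ small (A, B) = A)
  not_three_cover : ∀ A₁ B₁ A₂ B₂ A₃ B₃ : Set V,
    IsDirSep D A₁ B₁ → (A₁ ∩ B₁).ncard < k →
    IsDirSep D A₂ B₂ → (A₂ ∩ B₂).ncard < k →
    IsDirSep D A₃ B₃ → (A₃ ∩ B₃).ncard < k →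
    small (A₁, B₁) ∪ small (A₂, B₂) ∪ small (A₃, B₃) ≠ Set.univ

lemma ivtLast {α : Type} {R : α → α → Prop} {P : α → Prop} :
    ∀ L : List α, L.Chain' R → ∀ x ∈ L, ∀ b, L.getLast? = some b → ¬ P x → P b →
    ∃ a ∈ L, ∃ c ∈ L, R a c ∧ ¬ P a ∧ P c := by
  intro L
  induction L with
  | nil => simp
  | cons a M ih =>
    intro hchain x hx b hb hnx hpb
    cases M with
    | nil =>
      simp only [List.mem_singleton] at hx
      simp only [List.getLast?_singleton, Option.some.injEq] at hb
      subst hx; subst hb; exact absurd hpb hnx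
    | cons c M' =>
      change List.IsChain _ _ at hchain; rw [List.isChain_cons_cons] at hchain
      rw [List.getLast?_cons_cons] at hb
      rcases List.mem_cons.mp hx with rfl | hx'
      · by_cases hpc : P c
        · exact ⟨x, List.mem_cons_self, c, List.mem_cons_of_mem _ (List.mem_cons_self),
            hchain.1, hnx, hpc⟩
        · obtain ⟨a', ha', c', hc', h1, h2, h3⟩ :=
            ih hchain.2 c (List.mem_cons_self) b hb hpc hpb
          exact ⟨a', List.mem_cons_of_mem _ ha', c', List.mem_cons_of_mem _ hc', h1, h2, h3⟩
      · obtain ⟨a', ha', c', hc', h1, h2, h3⟩ := ih hchain.2 x hx' b hb hnx hpb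
        exact ⟨a', List.mem_cons_of_mem _ ha', c', List.mem_cons_of_mem _ hc', h1, h2, h3⟩

lemma ivtHead {α : Type} {R : α → α → Prop} {P : α → Prop} :
    ∀ L : List α, L.Chain' R → ∀ a, L.head? = some a → ∀ y ∈ L, ¬ P a → P y →
    ∃ a' ∈ L, ∃ c ∈ L, R a' c ∧ ¬ P a' ∧ P c := by
  intro L
  induction L with
  | nil => simp
  | cons a M ih =>
    intro hchain a₀ ha₀ y hy hna hpy
    simp only [List.head?_cons, Option.some.injEq] at ha₀
    subst ha₀
    rcases List.mem_cons.mp hy with rfl | hy'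
    · exact absurd hpy hna
    · cases M with
      | nil => simp at hy'
      | cons c M' =>
        change List.IsChain _ _ at hchain; rw [List.isChain_cons_cons] at hchain
        by_cases hpc : P c
        · exact ⟨a, List.mem_cons_self, c, List.mem_cons_of_mem _ (List.mem_cons_self),
            hchain.1, hna, hpc⟩
        · obtain ⟨a', ha', c', hc', h1, h2, h3⟩ := ih hchain.2 c rfl y hy' hpc hpy
          exact ⟨a', List.mem_cons_of_mem _ ha', c', List.mem_cons_of_mem _ hc', h1, h2, h3⟩
lemma sep_find {V : Type} {D : V → V → Prop} {A B : Set V} (h : IsDirSep D A B)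
    {a c : V} (hR : D a c) (ha : a ∉ A) (hc : c ∈ A) : c ∈ A ∩ B := by
  have haB : a ∈ B := by
    have : a ∈ A ∪ B := h.1 ▸ Set.mem_univ a
    rcases this with h' | h'
    · exact absurd h' ha
    · exact h'
  refine ⟨hc, ?_⟩
  by_contra hcB
  exact h.2 a c hR ⟨haB, ha⟩ ⟨hc, hcB⟩

lemma sep_cross_last {V : Type} {D : V → V → Prop} {A B : Set V} (h : IsDirSep D A B)
    {L : List V} (hc : L.Chain' D) {x b : V} (hx : x ∈ L) (hb : L.getLast? = some b)
    (hxA : x ∉ A) (hbA : b ∈ A) : ∃ z ∈ L, z ∈ A ∩ B := by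
  obtain ⟨a, ha, c, hcL, hac, hna, hpc⟩ := ivtLast (P := (· ∈ A)) L hc x hx b hb hxA hbA
  exact ⟨c, hcL, sep_find h hac hna hpc⟩

lemma sep_cross_head {V : Type} {D : V → V → Prop} {A B : Set V} (h : IsDirSep D A B)
    {L : List V} (hc : L.Chain' D) {a y : V} (ha : L.head? = some a) (hy : y ∈ L)
    (haA : a ∉ A) (hyA : y ∈ A) : ∃ z ∈ L, z ∈ A ∩ B := by
  obtain ⟨a', ha', c, hcL, hac, hna, hpc⟩ := ivtHead (P := (· ∈ A)) L hc a ha y hy haA hyA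
  exact ⟨c, hcL, sep_find h hac hna hpc⟩


section WallLemmas

variable {V : Type} {D : V → V → Prop} {l : ℕ} (W : SubdivEmbedding (elemWallAdj l) D)

lemma head_mem_path {u v : Fin (2*l) × Fin (4*l)} (hB : elemWallAdj l u v) :
    W.toFun u ∈ W.path u v :=
  List.mem_of_mem_head? (by rw [W.path_head u v hB]; rfl)

lemma last_mem_path {u v : Fin (2*l) × Fin (4*l)} (hB : elemWallAdj l u v) :
    W.toFun v ∈ W.path u v :=
  List.mem_of_mem_getLast? (by rw [W.path_last u v hB]; rfl)

lemma mem_path_cases {u v : Fin (2*l) × Fin (4*l)} (hB : elemWallAdj l u v)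
    {z : V} (hz : z ∈ W.path u v) :
    z = W.toFun u ∨ z = W.toFun v ∨ z ∈ ((W.path u v).drop 1).dropLast := by
  have hh := W.path_head u v hB
  have hlst := W.path_last u v hB
  have hlen := W.path_len u v hB
  cases hL : W.path u v with
  | nil => rw [hL] at hz; simp at hz
  | cons a M =>
    rw [hL] at hh hlst hlen hz
    simp only [List.head?_cons, Option.some.injEq] at hh
    rcases List.eq_nil_or_concat M with rfl | ⟨M', c, rfl⟩
    · simp at hlen
    · simp only [List.concat_eq_append] at hz hlst hlen hL ⊢
      have hgl : (a :: (M' ++ [c])).getLast? = some c := by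
        rw [show a :: (M' ++ [c]) = (a :: M') ++ [c] by simp, List.getLast?_concat]
      rw [hgl] at hlst
      injection hlst with hlst
      rcases List.mem_cons.mp hz with rfl | hz'
      · exact Or.inl hh
      · rcases List.mem_append.mp hz' with hz'' | hz''
        · refine Or.inr (Or.inr ?_)
          simpa [List.dropLast_concat] using hz''
        · simp only [List.mem_singleton] at hz''
          exact Or.inr (Or.inl (hz''.trans hlst))

lemma pathMeet {u v u' v' : Fin (2*l) × Fin (4*l)} (hB : elemWallAdj l u v)
    (hB' : elemWallAdj l u' v') (hne : (u, v) ≠ (u', v')) {z : V}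
    (hz : z ∈ W.path u v) (hz' : z ∈ W.path u' v') :
    (z = W.toFun u ∨ z = W.toFun v) ∧ (z = W.toFun u' ∨ z = W.toFun v') := by
  have h1 : ¬ z ∈ ((W.path u v).drop 1).dropLast := by
    intro hint
    rcases mem_path_cases W hB' hz' with h | h | h
    · exact W.internal_avoid_branch u v hB z hint ⟨u', h.symm⟩
    · exact W.internal_avoid_branch u v hB z hint ⟨v', h.symm⟩
    · exact W.internal_disjoint u v u' v' hB hB' hne z hint h
  have h2 : ¬ z ∈ ((W.path u' v').drop 1).dropLast := by
    intro hint
    rcases mem_path_cases W hB hz with h | h | h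
    · exact W.internal_avoid_branch u' v' hB' z hint ⟨u, h.symm⟩
    · exact W.internal_avoid_branch u' v' hB' z hint ⟨v, h.symm⟩
    · exact h1 h
  constructor
  · rcases mem_path_cases W hB hz with h | h | h
    exacts [Or.inl h, Or.inr h, absurd h h1]
  · rcases mem_path_cases W hB' hz' with h | h | h
    exacts [Or.inl h, Or.inr h, absurd h h2]

lemma cycles_disjoint {i j : ℕ} (hij : i ≠ j) {z : V}
    (hzi : z ∈ wallCycleVerts W i) (hzj : z ∈ wallCycleVerts W j) : False := by
  obtain ⟨u, v, hB, hu, hv, hz⟩ := hzi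
  obtain ⟨u', v', hB', hu', hv', hz'⟩ := hzj
  have hne : (u, v) ≠ (u', v') := by
    intro h
    injection h with h1 h2
    exact hij (by rw [← hu, h1, hu'])
  obtain ⟨h1, h2⟩ := pathMeet W hB hB' hne hz hz'
  have key : ∀ w w' : Fin (2*l) × Fin (4*l), w.1.val / 2 = i → w'.1.val / 2 = j →
      z = W.toFun w → z = W.toFun w' → False := by
    intro w w' hw hw' e e'
    have hww : w = w' := W.inj (e.symm.trans e')
    exact hij (by rw [← hw, hww, hw'])
  rcases h1 with h1 | h1 <;> rcases h2 with h2 | h2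
  exacts [key u u' hu hu' h1 h2, key u v' hu hv' h1 h2,
    key v u' hv hu' h1 h2, key v v' hv hv' h1 h2]

lemma elemWallAdj_of_val {a b : Fin (2*l) × Fin (4*l)}
    (h : (a.1.val = b.1.val ∧ b.2.val = (a.2.val + 1) % (4*l) ∧ a.2.val % 2 ≠ a.1.val % 2) ∨
       (a.2.val = b.2.val ∧ a.2.val % 2 = 0 ∧ b.1.val = a.1.val + 1) ∨
       (a.2.val = b.2.val ∧ a.2.val % 2 = 1 ∧ a.1.val = b.1.val + 1)) :
    elemWallAdj l a b := by
  rcases h with ⟨h1, h2, h3⟩ | ⟨h1, h2, h3⟩ | ⟨h1, h2, h3⟩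
  · exact Or.inl ⟨Fin.ext h1, h2, h3⟩
  · exact Or.inr (Or.inl ⟨Fin.ext h1, h2, h3⟩)
  · exact Or.inr (Or.inr ⟨Fin.ext h1, h2, h3⟩)

lemma branch_mem_cycle {j r p : ℕ} (hj : j < l) (hp : p < 4*l) (hr2 : r / 2 = j)
    (hrl : r < 2*l) : W.toFun (⟨r, hrl⟩, ⟨p, hp⟩) ∈ wallCycleVerts W j := by
  have hr : r = 2*j ∨ r = 2*j + 1 := by omega
  have h2j : 2*j + 1 < 2*l := by omega
  have h2jl : 2*j < 2*l := by omega
  rcases Nat.mod_two_eq_zero_or_one p with hpe | hpo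
  · have hB : elemWallAdj l (⟨2*j, h2jl⟩, ⟨p, hp⟩) (⟨2*j+1, h2j⟩, ⟨p, hp⟩) :=
      elemWallAdj_of_val (Or.inr (Or.inl ⟨rfl, hpe, rfl⟩))
    rcases hr with rfl | rfl
    · exact ⟨_, _, hB, show 2*j/2 = j by omega, show (2*j+1)/2 = j by omega,
        head_mem_path W hB⟩
    · exact ⟨_, _, hB, show 2*j/2 = j by omega, show (2*j+1)/2 = j by omega,
        last_mem_path W hB⟩
  · have hB : elemWallAdj l (⟨2*j+1, h2j⟩, ⟨p, hp⟩) (⟨2*j, h2jl⟩, ⟨p, hp⟩) :=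
      elemWallAdj_of_val (Or.inr (Or.inr ⟨rfl, hpo, rfl⟩))
    rcases hr with rfl | rfl
    · exact ⟨_, _, hB, show (2*j+1)/2 = j by omega, show 2*j/2 = j by omega,
        last_mem_path W hB⟩
    · exact ⟨_, _, hB, show (2*j+1)/2 = j by omega, show 2*j/2 = j by omega,
        head_mem_path W hB⟩

end WallLemmas


def bandF (l j : ℕ) (hj : j < l) (t : ℕ) : Fin (2*l) × Fin (4*l) :=
  (⟨2*j + (if t % (8*l) % 4 = 1 ∨ t % (8*l) % 4 = 2 then 1 else 0), by
      split <;> omega⟩,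
   ⟨t % (8*l) / 2, by
      have : t % (8*l) < 8*l := Nat.mod_lt t (by omega)
      omega⟩)

lemma bandF_fst (l j : ℕ) (hj : j < l) (t : ℕ) :
    (bandF l j hj t).1.val
      = 2*j + (if t % (8*l) % 4 = 1 ∨ t % (8*l) % 4 = 2 then 1 else 0) := rfl

lemma bandF_snd (l j : ℕ) (hj : j < l) (t : ℕ) :
    (bandF l j hj t).2.val = t % (8*l) / 2 := rfl

lemma bandF_band (l j : ℕ) (hj : j < l) (t : ℕ) :
    (bandF l j hj t).1.val / 2 = j := by
  rw [bandF_fst]; split <;> omega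

lemma bandF_step (l j : ℕ) (hj : j < l) (t : ℕ) :
    elemWallAdj l (bandF l j hj t) (bandF l j hj (t+1)) := by
  have hM0 : 0 < 8*l := by omega
  have h1 : t % (8*l) < 8*l := Nat.mod_lt t hM0
  have h2 : (t+1) % (8*l) = if t % (8*l) + 1 = 8*l then 0 else t % (8*l) + 1 := by
    split
    · next h => rw [Nat.add_mod, Nat.mod_eq_of_lt (show 1 < 8*l by omega), h, Nat.mod_self]
    · next h => rw [Nat.add_mod, Nat.mod_eq_of_lt (show 1 < 8*l by omega),
        Nat.mod_eq_of_lt (by omega)]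
  apply elemWallAdj_of_val
  rw [bandF_fst, bandF_fst, bandF_snd, bandF_snd, h2]
  set r := t % (8*l) with hr
  by_cases hw : r + 1 = 8*l
  · rw [if_pos hw]
    have hr3 : r % 4 = 3 := by omega
    have e1 : (if r % 4 = 1 ∨ r % 4 = 2 then 1 else 0) = 0 := if_neg (by omega)
    have e2 : (if (0:ℕ) % 4 = 1 ∨ (0:ℕ) % 4 = 2 then 1 else 0) = 0 := if_neg (by omega)
    rw [e1, e2]
    refine Or.inl ⟨rfl, ?_, by omega⟩
    have h4 : r / 2 + 1 = 4*l := by omega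
    rw [show (0:ℕ)/2 = 0 from rfl, h4, Nat.mod_self]
  · rw [if_neg hw]
    have hcases : r % 4 = 0 ∨ r % 4 = 1 ∨ r % 4 = 2 ∨ r % 4 = 3 := by omega
    rcases hcases with h | h | h | h
    · have e1 : (if r % 4 = 1 ∨ r % 4 = 2 then 1 else 0) = 0 := if_neg (by omega)
      have e2 : (if (r+1) % 4 = 1 ∨ (r+1) % 4 = 2 then 1 else 0) = 1 := if_pos (by omega)
      rw [e1, e2]
      exact Or.inr (Or.inl ⟨by omega, by omega, by omega⟩)
    · have e1 : (if r % 4 = 1 ∨ r % 4 = 2 then 1 else 0) = 1 := if_pos (by omega)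
      have e2 : (if (r+1) % 4 = 1 ∨ (r+1) % 4 = 2 then 1 else 0) = 1 := if_pos (by omega)
      rw [e1, e2]
      refine Or.inl ⟨rfl, ?_, by omega⟩
      rw [Nat.mod_eq_of_lt (show r/2 + 1 < 4*l by omega)]
      omega
    · have e1 : (if r % 4 = 1 ∨ r % 4 = 2 then 1 else 0) = 1 := if_pos (by omega)
      have e2 : (if (r+1) % 4 = 1 ∨ (r+1) % 4 = 2 then 1 else 0) = 0 := if_neg (by omega)
      rw [e1, e2]
      exact Or.inr (Or.inr ⟨by omega, by omega, by omega⟩)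
    · have e1 : (if r % 4 = 1 ∨ r % 4 = 2 then 1 else 0) = 0 := if_neg (by omega)
      have e2 : (if (r+1) % 4 = 1 ∨ (r+1) % 4 = 2 then 1 else 0) = 0 := if_neg (by omega)
      rw [e1, e2]
      refine Or.inl ⟨rfl, ?_, by omega⟩
      rw [Nat.mod_eq_of_lt (show r/2 + 1 < 4*l by omega)]
      omega

lemma bandF_surj (l j : ℕ) (hj : j < l) (w : Fin (2*l) × Fin (4*l))
    (hw : w.1.val / 2 = j) : ∃ t < 8*l, bandF l j hj t = w := by
  obtain ⟨⟨r, hrl⟩, ⟨p, hp⟩⟩ := w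
  simp only at hw
  rcases Nat.mod_two_eq_zero_or_one r with hre | hro <;>
    rcases Nat.mod_two_eq_zero_or_one p with hpe | hpo
  · refine ⟨2*p, by omega, Prod.ext (Fin.ext ?_) (Fin.ext ?_)⟩
    · rw [bandF_fst, Nat.mod_eq_of_lt (show 2*p < 8*l by omega), if_neg (by omega)]
      show _ = r
      omega
    · rw [bandF_snd, Nat.mod_eq_of_lt (show 2*p < 8*l by omega)]
      show _ = p
      omega
  · refine ⟨2*p+1, by omega, Prod.ext (Fin.ext ?_) (Fin.ext ?_)⟩
    · rw [bandF_fst, Nat.mod_eq_of_lt (show 2*p+1 < 8*l by omega), if_neg (by omega)]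
      show _ = r
      omega
    · rw [bandF_snd, Nat.mod_eq_of_lt (show 2*p+1 < 8*l by omega)]
      show _ = p
      omega
  · refine ⟨2*p+1, by omega, Prod.ext (Fin.ext ?_) (Fin.ext ?_)⟩
    · rw [bandF_fst, Nat.mod_eq_of_lt (show 2*p+1 < 8*l by omega), if_pos (by omega)]
      show _ = r
      omega
    · rw [bandF_snd, Nat.mod_eq_of_lt (show 2*p+1 < 8*l by omega)]
      show _ = p
      omega
  · refine ⟨2*p, by omega, Prod.ext (Fin.ext ?_) (Fin.ext ?_)⟩
    · rw [bandF_fst, Nat.mod_eq_of_lt (show 2*p < 8*l by omega), if_pos (by omega)]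
      show _ = r
      omega
    · rw [bandF_snd, Nat.mod_eq_of_lt (show 2*p < 8*l by omega)]
      show _ = p
      omega

lemma bandWalk {l j : ℕ} (hj : j < l) (v u' : Fin (2*l) × Fin (4*l))
    (hv : v.1.val / 2 = j) (hu' : u'.1.val / 2 = j) :
    ∃ us : List (Fin (2*l) × Fin (4*l)),
      us.Chain' (fun a b => elemWallAdj l a b ∧ a.1.val / 2 = j ∧ b.1.val / 2 = j) ∧
      us.head? = some v ∧ us.getLast? = some u' := by
  obtain ⟨s, hs, hsv⟩ := bandF_surj l j hj v hv
  obtain ⟨s', hs', hsu⟩ := bandF_surj l j hj u' hu'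
  set n := s' + 8*l - s with hn
  refine ⟨(List.range (n+1)).map (fun t => bandF l j hj (s + t)), ?_, ?_, ?_⟩
  · change List.IsChain _ _; rw [List.isChain_map, List.isChain_range_succ]
    intro m _
    exact ⟨bandF_step l j hj (s+m), bandF_band l j hj (s+m), bandF_band l j hj (s+(m+1))⟩
  · rw [List.range_succ_eq_map]
    simp only [List.map_cons, List.head?_cons]
    exact congrArg some hsv
  · rw [List.range_succ, List.map_append]
    simp only [List.map_cons, List.map_nil, List.getLast?_concat]
    refine congrArg some ?_
    have h1 : s + n = s' + 8*l := by omega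
    rw [h1, ← hsu]
    have h2 : (s' + 8*l) % (8*l) = s' := by
      rw [Nat.add_mod_right, Nat.mod_eq_of_lt hs']
    exact Prod.ext (Fin.ext (by rw [bandF_fst, bandF_fst, h2, Nat.mod_eq_of_lt hs']))
      (Fin.ext (by rw [bandF_snd, bandF_snd, h2, Nat.mod_eq_of_lt hs']))


def colF (l x p : ℕ) (hx : x < 2*l) (hp : p < 4*l) (s : ℕ) : Fin (2*l) × Fin (4*l) :=
  (⟨x - s, by omega⟩, ⟨p, hp⟩)

lemma colF_fst (l x p : ℕ) (hx : x < 2*l) (hp : p < 4*l) (s : ℕ) :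
    (colF l x p hx hp s).1.val = x - s := rfl

lemma colF_snd (l x p : ℕ) (hx : x < 2*l) (hp : p < 4*l) (s : ℕ) :
    (colF l x p hx hp s).2.val = p := rfl

lemma pat_cross {V : Type} {D : V → V → Prop} {l : ℕ}
    (W : SubdivEmbedding (elemWallAdj l) D) {A B : Set V} (h : IsDirSep D A B)
    (R : Fin (2*l) × Fin (4*l) → Fin (2*l) × Fin (4*l) → Prop)
    (hR : ∀ u v, R u v → elemWallAdj l u v)
    (us : List (Fin (2*l) × Fin (4*l))) (hchain : us.Chain' R)
    {u0 v0 : Fin (2*l) × Fin (4*l)} (hh : us.head? = some u0)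
    (hlast : us.getLast? = some v0)
    (hu0 : W.toFun u0 ∉ A) (hv0 : W.toFun v0 ∈ A) :
    ∃ u ∈ us, ∃ v ∈ us, R u v ∧ ∃ z ∈ W.path u v, z ∈ A ∩ B := by
  have hu0mem : u0 ∈ us := List.mem_of_mem_head? (Option.mem_def.mpr hh)
  obtain ⟨u, hu, v, hv, huv, hnu, hpv⟩ :=
    ivtLast (P := fun w => W.toFun w ∈ A) us hchain u0 hu0mem v0 hlast hu0 hv0
  obtain ⟨z, hz, hzAB⟩ := sep_cross_head h (W.path_chain u v (hR u v huv))
    (W.path_head u v (hR u v huv)) (last_mem_path W (hR u v huv)) hnu hpv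
  exact ⟨u, hu, v, hv, huv, z, hz, hzAB⟩

lemma cycle_oneSide {V : Type} {D : V → V → Prop} {l : ℕ}
    (W : SubdivEmbedding (elemWallAdj l) D) {A B : Set V} (h : IsDirSep D A B)
    {j : ℕ} (hj : j < l) (hdisj : ∀ z ∈ wallCycleVerts W j, z ∉ A ∩ B) :
    wallCycleVerts W j ⊆ A \ B ∨ wallCycleVerts W j ⊆ B \ A := by
  by_contra hcon
  rw [not_or, Set.not_subset, Set.not_subset] at hcon
  obtain ⟨⟨x, hxQ, hxA⟩, ⟨y, hyQ, hyB⟩⟩ := hcon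
  have hside : ∀ z ∈ wallCycleVerts W j, (z ∈ A ∧ z ∉ B) ∨ (z ∈ B ∧ z ∉ A) := by
    intro z hz
    have hz1 : z ∈ A ∪ B := h.1 ▸ Set.mem_univ z
    have hz2 := hdisj z hz
    rcases hz1 with h' | h'
    · exact Or.inl ⟨h', fun hb => hz2 ⟨h', hb⟩⟩
    · by_cases ha : z ∈ A
      · exact Or.inl ⟨ha, fun hb => hz2 ⟨ha, hb⟩⟩
      · exact Or.inr ⟨h', ha⟩
  have hxnA : x ∉ A := by
    rcases hside x hxQ with h' | h'
    · exact absurd ⟨h'.1, h'.2⟩ hxA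
    · exact h'.2
  have hyA : y ∈ A := by
    rcases hside y hyQ with h' | h'
    · exact h'.1
    · exact absurd ⟨h'.1, h'.2⟩ hyB
  obtain ⟨u, v, hB, hu, hv, hx⟩ := hxQ
  obtain ⟨u', v', hB', hu', hv', hy⟩ := hyQ
  by_cases hvA : W.toFun v ∈ A
  · obtain ⟨z, hz, hzAB⟩ :=
      sep_cross_last h (W.path_chain u v hB) hx (W.path_last u v hB) hxnA hvA
    exact hdisj z ⟨u, v, hB, hu, hv, hz⟩ hzAB
  · by_cases huA : W.toFun u' ∈ A
    · obtain ⟨us, hchain, hh, hlast⟩ := bandWalk hj v u' hv hu'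
      obtain ⟨u2, _, v2, _, ⟨hadj, hb1, hb2⟩, z, hz, hzAB⟩ :=
        pat_cross W h _ (fun a b hab => hab.1) us hchain hh hlast hvA huA
      exact hdisj z ⟨u2, v2, hadj, hb1, hb2, hz⟩ hzAB
    · obtain ⟨z, hz, hzAB⟩ := sep_cross_head h (W.path_chain u' v' hB')
        (W.path_head u' v' hB') hy huA hyA
      exact hdisj z ⟨u', v', hB', hu', hv', hz⟩ hzAB

lemma no_opposite {V : Type} [Fintype V] {D : V → V → Prop} {l k : ℕ}
    (W : SubdivEmbedding (elemWallAdj l) D) {A B : Set V} (h : IsDirSep D A B)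
    (hord : (A ∩ B).ncard < k) (hkl : k ≤ l) {i j : ℕ} (hi : i < l) (hj : j < l)
    (hQi : wallCycleVerts W i ⊆ A \ B) (hQj : wallCycleVerts W j ⊆ B \ A) : False := by
  have hl0 : 0 < l := by omega
  have hne : i ≠ j := by
    rintro rfl
    have hx : W.toFun (⟨2*i, by omega⟩, ⟨0, by omega⟩) ∈ wallCycleVerts W i :=
      branch_mem_cycle W hi (by omega) (by omega) (by omega)
    exact (hQj hx).2 (hQi hx).1
  have key : ∀ t : Fin k, ∃ z ∈ A ∩ B, ∃ u v : Fin (2*l) × Fin (4*l),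
      elemWallAdj l u v ∧ u.2.val = 2*(t:ℕ) + (if i < j then 1 else 0) ∧
      v.2.val = 2*(t:ℕ) + (if i < j then 1 else 0) ∧ z ∈ W.path u v := by
    intro t
    have htk : (t:ℕ) < k := t.isLt
    rcases lt_or_gt_of_ne hne with hij | hij
    · -- i < j : odd positions, rows descending 2j+1 → 2i
      rw [if_pos hij]
      have hp : 2*(t:ℕ)+1 < 4*l := by omega
      have hx2 : 2*j+1 < 2*l := by omega
      obtain ⟨u, hu, v, hv, ⟨hadj, hup, hvp⟩, z, hz, hzAB⟩ :=
        pat_cross W h (fun a b => elemWallAdj l a b ∧ a.2.val = 2*(t:ℕ)+1 ∧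
            b.2.val = 2*(t:ℕ)+1) (fun a b hab => hab.1)
          ((List.range ((2*j+1-2*i)+1)).map (colF l (2*j+1) (2*(t:ℕ)+1) hx2 hp))
          (by
            change List.IsChain _ _; rw [List.isChain_map, List.isChain_range_succ]
            intro m hm
            refine ⟨elemWallAdj_of_val (Or.inr (Or.inr ?_)), colF_snd _ _ _ _ _ _,
              colF_snd _ _ _ _ _ _⟩
            rw [colF_fst, colF_fst, colF_snd, colF_snd]
            refine ⟨rfl, by omega, by omega⟩)
          (by rw [List.range_succ_eq_map]; rfl)
          (by rw [List.range_succ, List.map_append]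
              simp only [List.map_cons, List.map_nil, List.getLast?_concat]
              rfl)
          (by
            refine (hQj (branch_mem_cycle W hj hp (show (2*j+1-0)/2 = j by omega)
              (by omega))).2)
          (by
            refine (hQi (branch_mem_cycle W hi hp
              (show (2*j+1-(2*j+1-2*i))/2 = i by omega) (by omega))).1)
      exact ⟨z, hzAB, u, v, hadj, hup, hvp, hz⟩
    · -- j < i : even positions, rows ascending 2j → 2i+1
      rw [if_neg (by omega)]
      have hp : 2*(t:ℕ) < 4*l := by omega
      have hx2 : 2*i+1 < 2*l := by omega
      obtain ⟨u, hu, v, hv, ⟨hadj, hup, hvp⟩, z, hz, hzAB⟩ :=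
        pat_cross W h (fun a b => elemWallAdj l a b ∧ a.2.val = 2*(t:ℕ) ∧
            b.2.val = 2*(t:ℕ)) (fun a b hab => hab.1)
          ((List.range ((2*i+1-2*j)+1)).map
            (fun s => colF l (2*i+1) (2*(t:ℕ)) hx2 hp ((2*i+1-2*j) - s)))
          (by
            change List.IsChain _ _; rw [List.isChain_map, List.isChain_range_succ]
            intro m hm
            refine ⟨elemWallAdj_of_val (Or.inr (Or.inl ?_)), colF_snd _ _ _ _ _ _,
              colF_snd _ _ _ _ _ _⟩
            rw [colF_fst, colF_fst, colF_snd, colF_snd]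
            refine ⟨rfl, by omega, by omega⟩)
          (by rw [List.range_succ_eq_map]; rfl)
          (by rw [List.range_succ, List.map_append]
              simp only [List.map_cons, List.map_nil, List.getLast?_concat]
              rfl)
          (by
            refine (hQj (branch_mem_cycle W hj hp
              (show (2*i+1-((2*i+1-2*j)-0))/2 = j by omega) (by omega))).2)
          (by
            refine (hQi (branch_mem_cycle W hi hp
              (show (2*i+1-((2*i+1-2*j)-(2*i+1-2*j)))/2 = i by omega) (by omega))).1)
      exact ⟨z, hzAB, u, v, hadj, hup, hvp, hz⟩
  choose z hzAB u v hadj hu2 hv2 hzmem using key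
  have hinj : Function.Injective z := by
    intro t t' he
    by_contra hne'
    have hvalne : 2*(t:ℕ) + (if i < j then 1 else 0) ≠ 2*(t':ℕ) + (if i < j then 1 else 0) := by
      intro hcon
      apply hne'
      refine Fin.ext ?_
      split at hcon <;> omega
    have hne2 : (u t, v t) ≠ (u t', v t') := by
      intro hpq
      injection hpq with hp1 hp2
      exact hvalne (by rw [← hu2 t, ← hu2 t', hp1])
    have hzmem' : z t ∈ W.path (u t') (v t') := by rw [he]; exact hzmem t'
    obtain ⟨h1, h2⟩ := pathMeet W (hadj t) (hadj t') hne2 (hzmem t) hzmem'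
    rcases h1 with h1 | h1 <;> rcases h2 with h2 | h2
    · have hww := W.inj (h1.symm.trans h2)
      exact hvalne (by rw [← hu2 t, ← hu2 t', hww])
    · have hww := W.inj (h1.symm.trans h2)
      exact hvalne (by rw [← hu2 t, ← hv2 t', hww])
    · have hww := W.inj (h1.symm.trans h2)
      exact hvalne (by rw [← hv2 t, ← hu2 t', hww])
    · have hww := W.inj (h1.symm.trans h2)
      exact hvalne (by rw [← hv2 t, ← hv2 t', hww])
  have hsub : Set.range z ⊆ A ∩ B := by
    rintro _ ⟨t, rfl⟩
    exact hzAB t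
  have hcard : k ≤ (A ∩ B).ncard := by
    calc k = (Set.univ : Set (Fin k)).ncard := by
          rw [Set.ncard_univ, Nat.card_eq_fintype_card, Fintype.card_fin]
      _ = (z '' Set.univ).ncard := (Set.ncard_image_of_injective _ hinj).symm
      _ ≤ (A ∩ B).ncard := Set.ncard_le_ncard (by rwa [Set.image_univ]) (A ∩ B).toFinite
  omega

lemma exists_cycle_avoiding {V : Type} [Fintype V] {D : V → V → Prop} {l : ℕ}
    (W : SubdivEmbedding (elemWallAdj l) D) (S : Set V) (hS : S.ncard < l) :
    ∃ i < l, ∀ z ∈ wallCycleVerts W i, z ∉ S := by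
  by_contra hcon
  push_neg at hcon
  have hch : ∀ i : Fin l, ∃ z, z ∈ wallCycleVerts W i.val ∧ z ∈ S := by
    intro i
    obtain ⟨z, hz1, hz2⟩ := hcon i.val i.isLt
    exact ⟨z, hz1, hz2⟩
  choose g hg using hch
  have hinj : Function.Injective g := by
    intro a b hab
    by_contra hne
    have hb : g a ∈ wallCycleVerts W b.val := by rw [hab]; exact (hg b).1
    exact cycles_disjoint W (fun hv => hne (Fin.ext hv)) (hg a).1 hb
  have hsub : Set.range g ⊆ S := by
    rintro _ ⟨t, rfl⟩
    exact (hg t).2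
  have hge : l ≤ S.ncard := by
    calc l = (Set.univ : Set (Fin l)).ncard := by
          rw [Set.ncard_univ, Nat.card_eq_fintype_card, Fintype.card_fin]
      _ = (g '' Set.univ).ncard := (Set.ncard_image_of_injective _ hinj).symm
      _ ≤ S.ncard := Set.ncard_le_ncard (by rwa [Set.image_univ]) S.toFinite
  omega

/-- **A large cylindrical wall induces a tangle.**  Let `W` be a cylindrical wall of
order `l ≥ 3k` contained in `D`, with concentric dicycles `Q_1, …, Q_l`.  Then for every
directed separation `(A,B)` of order less than `k` exactly one side `X ∈ {A,B}` is such
that `X ∖ (A ∩ B)` contains the entire vertex set of some cycle `Q_i`, and the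
orientation mapping every such separation to this side is a tangle of order `k`. -/
theorem wall_induces_tangle
    (V : Type) [Fintype V] (D : V → V → Prop) (hD : Irreflexive D)
    (k l : ℕ) (hk : 1 ≤ k) (hl : 3 * k ≤ l)
    (W : SubdivEmbedding (elemWallAdj l) D) :
    (∀ A B : Set V, IsDirSep D A B → (A ∩ B).ncard < k →
        Xor' (∃ i < l, wallCycleVerts W i ⊆ A \ B)
          (∃ i < l, wallCycleVerts W i ⊆ B \ A)) ∧
      ∃ T : Tangle D k,
        ∀ A B : Set V, IsDirSep D A B → (A ∩ B).ncard < k →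
          ((∃ i < l, wallCycleVerts W i ⊆ A \ B) →
              T.big (A, B) = A ∧ T.small (A, B) = B) ∧
          ((∃ i < l, wallCycleVerts W i ⊆ B \ A) →
              T.big (A, B) = B ∧ T.small (A, B) = A) := by
  classical
  have hkl : k ≤ l := by omega
  have hxor : ∀ A B : Set V, IsDirSep D A B → (A ∩ B).ncard < k →
      Xor' (∃ i < l, wallCycleVerts W i ⊆ A \ B)
        (∃ i < l, wallCycleVerts W i ⊆ B \ A) := by
    intro A B hsep hord
    have hex : (∃ i < l, wallCycleVerts W i ⊆ A \ B) ∨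
        (∃ i < l, wallCycleVerts W i ⊆ B \ A) := by
      obtain ⟨i, hi, havoid⟩ := exists_cycle_avoiding W (A ∩ B) (by omega)
      rcases cycle_oneSide W hsep hi havoid with h | h
      · exact Or.inl ⟨i, hi, h⟩
      · exact Or.inr ⟨i, hi, h⟩
    have hnand : ¬ ((∃ i < l, wallCycleVerts W i ⊆ A \ B) ∧
        (∃ i < l, wallCycleVerts W i ⊆ B \ A)) := by
      rintro ⟨⟨i, hi, h1⟩, ⟨j, hj, h2⟩⟩
      exact no_opposite W hsep hord hkl hi hj h1 h2
    rcases hex with h | h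
    · exact Or.inl ⟨h, fun h' => hnand ⟨h, h'⟩⟩
    · exact Or.inr ⟨h, fun h' => hnand ⟨h', h⟩⟩
  refine ⟨hxor, ?_⟩
  have hl0 : 0 < l := by omega
  refine ⟨⟨fun pr => if ∃ i < l, wallCycleVerts W i ⊆ pr.1 \ pr.2 then pr.1 else pr.2,
          fun pr => if ∃ i < l, wallCycleVerts W i ⊆ pr.1 \ pr.2 then pr.2 else pr.1,
          ?_, ?_⟩, ?_⟩
  · -- sides
    intro A B hsep hord
    by_cases hc : ∃ i < l, wallCycleVerts W i ⊆ A \ B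
    · left
      constructor
      · show (if ∃ i < l, wallCycleVerts W i ⊆ A \ B then A else B) = A
        rw [if_pos hc]
      · show (if ∃ i < l, wallCycleVerts W i ⊆ A \ B then B else A) = B
        rw [if_pos hc]
    · right
      constructor
      · show (if ∃ i < l, wallCycleVerts W i ⊆ A \ B then A else B) = B
        rw [if_neg hc]
      · show (if ∃ i < l, wallCycleVerts W i ⊆ A \ B then B else A) = A
        rw [if_neg hc]
  · -- not_three_cover
    intro A₁ B₁ A₂ B₂ A₃ B₃ h1 o1 h2 o2 h3 o3 hcover
    have hS : ((A₁ ∩ B₁) ∪ (A₂ ∩ B₂) ∪ (A₃ ∩ B₃)).ncard < l := by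
      have e1 := Set.ncard_union_le ((A₁ ∩ B₁) ∪ (A₂ ∩ B₂)) (A₃ ∩ B₃)
      have e2 := Set.ncard_union_le (A₁ ∩ B₁) (A₂ ∩ B₂)
      omega
    obtain ⟨i, hi, havoid⟩ :=
      exists_cycle_avoiding W ((A₁ ∩ B₁) ∪ (A₂ ∩ B₂) ∪ (A₃ ∩ B₃)) hS
    have key : ∀ A B : Set V, IsDirSep D A B → (A ∩ B).ncard < k →
        (∀ z ∈ wallCycleVerts W i, z ∉ A ∩ B) →
        ∀ z ∈ wallCycleVerts W i,
          z ∉ (if ∃ i' < l, wallCycleVerts W i' ⊆ A \ B then B else A) := by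
      intro A B hsep hord havd z hz
      rcases cycle_oneSide W hsep hi havd with hside | hside
      · rw [if_pos ⟨i, hi, hside⟩]
        exact (hside hz).2
      · have hcond : ¬ ∃ i' < l, wallCycleVerts W i' ⊆ A \ B := by
          rintro ⟨i', hi', h'⟩
          exact no_opposite W hsep hord hkl hi' hi h' hside
        rw [if_neg hcond]
        exact (hside hz).2
    have hx : W.toFun (⟨2*i, by omega⟩, ⟨0, by omega⟩) ∈ wallCycleVerts W i :=
      branch_mem_cycle W hi (by omega) (by omega) (by omega)
    set x := W.toFun (⟨2*i, by omega⟩, ⟨0, by omega⟩) with hxdef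
    have hxmem : x ∈ (Set.univ : Set V) := Set.mem_univ x
    rw [← hcover] at hxmem
    rcases hxmem with hm | hm
    · rcases hm with hm | hm
      · exact key A₁ B₁ h1 o1
          (fun z hz hmem => havoid z hz (Set.mem_union_left _ (Set.mem_union_left _ hmem)))
          x hx hm
      · exact key A₂ B₂ h2 o2
          (fun z hz hmem => havoid z hz (Set.mem_union_left _ (Set.mem_union_right _ hmem)))
          x hx hm
    · exact key A₃ B₃ h3 o3
        (fun z hz hmem => havoid z hz (Set.mem_union_right _ hmem))
        x hx hm
  · -- final clauses
    intro A B hsep hord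
    constructor
    · intro hex
      constructor
      · show (if ∃ i < l, wallCycleVerts W i ⊆ A \ B then A else B) = A
        rw [if_pos hex]
      · show (if ∃ i < l, wallCycleVerts W i ⊆ A \ B then B else A) = B
        rw [if_pos hex]
    · intro hex'
      have hnc : ¬ ∃ i < l, wallCycleVerts W i ⊆ A \ B := by
        rintro ⟨i, hi, h'⟩
        obtain ⟨j, hj, h''⟩ := hex'
        exact no_opposite W hsep hord hkl hi hj h' h''
      constructor
      · show (if ∃ i < l, wallCycleVerts W i ⊆ A \ B then A else B) = B
        rw [if_neg hnc]
      · show (if ∃ i < l, wallCycleVerts W i ⊆ A \ B then B else A) = A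
        rw [if_neg hnc]
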